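/- With S(m,n,p,d) = (2mp(n-1)(2-p) + p^2(n-1)\sum_i d_i^2 - 4m^2p^2)^{1/2}, the variance of the uniform nontrivial eigenvalue \ell of the Laplacian of \hat{G} \in G(G,p) satisfies \sigma^2 = S(m,n,p,d)^2/(n-1)^2. -/

import Mathlib

open MeasureTheory ProbabilityTheory Finset SimpleGraph
attribute [local instance] Classical.propDecidable

/-- The eigenvalues of a real symmetric matrix, sorted in increasing order. -/
noncomputable def sortedEigs {n : ℕ} (A : Matrix (Fin n) (Fin n) ℝ) : List ℝ :=
  if hA : A.IsHermitian then
    Multiset.sort (Multiset.ofList (List.ofFn hA.eigenvalues)) (· ≤ ·)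
  else []

/-- `eig A i` is the `i`-th smallest eigenvalue `λ_i(A)` (1-indexed). -/
noncomputable def eig {n : ℕ} (A : Matrix (Fin n) (Fin n) ℝ) (i : ℕ) : ℝ :=
  (sortedEigs A).getD (i - 1) 0

/-- `S(m,n,p,d) = (2mp(n-1)(2-p) + p²(n-1)∑ᵢdᵢ² - 4m²p²)^{1/2}`. -/
noncomputable def S (m n : ℕ) (p : ℝ) (d : Fin n → ℕ) : ℝ :=
  Real.sqrt (2 * m * p * ((n : ℝ) - 1) * (2 - p)
    + p ^ 2 * ((n : ℝ) - 1) * ∑ i, (d i : ℝ) ^ 2 - 4 * (m : ℝ) ^ 2 * p ^ 2)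

section Aux

lemma trace_eq_sum_eig {n : ℕ} {A : Matrix (Fin n) (Fin n) ℝ} (hA : A.IsHermitian) :
    A.trace = ∑ i, hA.eigenvalues i := by
  conv_lhs => rw [hA.spectral_theorem]
  rw [Unitary.conjStarAlgAut_apply, Matrix.trace_mul_cycle, Unitary.coe_star_mul_self, one_mul, Matrix.trace_diagonal]
  simp

lemma trace_sq_eq_sum_eig_sq {n : ℕ} {A : Matrix (Fin n) (Fin n) ℝ} (hA : A.IsHermitian) :
    (A * A).trace = ∑ i, (hA.eigenvalues i) ^ 2 := by
  conv_lhs => rw [hA.spectral_theorem]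
  rw [Unitary.conjStarAlgAut_apply]
  rw [show ∀ U D V : Matrix (Fin n) (Fin n) ℝ, (U * D * V) * (U * D * V) = U * (D * (V * U) * D) * V by
      intros; simp only [mul_assoc],
    Unitary.coe_star_mul_self, mul_one]
  rw [Matrix.trace_mul_cycle, Unitary.coe_star_mul_self, one_mul,
    Matrix.diagonal_mul_diagonal, Matrix.trace_diagonal]
  simp [sq]

lemma sortedEigs_coe {n : ℕ} {A : Matrix (Fin n) (Fin n) ℝ} (hA : A.IsHermitian) :
    (↑(sortedEigs A) : Multiset ℝ) = ↑(List.ofFn hA.eigenvalues) := by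
  rw [show sortedEigs A = Multiset.sort ↑(List.ofFn hA.eigenvalues) (· ≤ ·) from dif_pos hA]
  exact Multiset.sort_eq ..

lemma sortedEigs_length {n : ℕ} {A : Matrix (Fin n) (Fin n) ℝ} (hA : A.IsHermitian) :
    (sortedEigs A).length = n := by
  have := congrArg Multiset.card (sortedEigs_coe hA)
  simpa using this

lemma sortedEigs_sorted {n : ℕ} (A : Matrix (Fin n) (Fin n) ℝ) :
    (sortedEigs A).Pairwise (· ≤ ·) := by
  by_cases hA : A.IsHermitian
  · rw [show sortedEigs A = Multiset.sort ↑(List.ofFn hA.eigenvalues) (· ≤ ·) from dif_pos hA]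
    exact Multiset.pairwise_sort ..
  · rw [show sortedEigs A = [] from dif_neg hA]; simp

lemma sortedEigs_mem {n : ℕ} {A : Matrix (Fin n) (Fin n) ℝ} (hA : A.IsHermitian) {x : ℝ} :
    x ∈ sortedEigs A ↔ ∃ i, hA.eigenvalues i = x := by
  rw [← Multiset.mem_coe, sortedEigs_coe hA, Multiset.mem_coe, List.mem_ofFn]

lemma sortedEigs_map_sum {n : ℕ} {A : Matrix (Fin n) (Fin n) ℝ} (hA : A.IsHermitian)
    (f : ℝ → ℝ) : ((sortedEigs A).map f).sum = ∑ i, f (hA.eigenvalues i) := by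
  have : ((sortedEigs A).map f).sum = ((Multiset.map f ↑(sortedEigs A))).sum := by simp
  rw [this, sortedEigs_coe hA]
  simp [List.map_ofFn, List.sum_ofFn, Function.comp]

lemma list_getD_sum_f (f : ℝ → ℝ) : ∀ l : List ℝ,
    ∑ i ∈ Finset.range l.length, f (l.getD i 0) = (l.map f).sum := by
  intro l
  induction l with
  | nil => simp
  | cons a t ih =>
    rw [List.length_cons, Finset.sum_range_succ']
    simp only [List.getD_cons_succ, List.getD_cons_zero, ih, List.map_cons, List.sum_cons]
    ring

lemma sum_Icc_getD (g : ℕ → ℝ) (n : ℕ) (hn : 1 ≤ n) :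
    ∑ i ∈ Finset.Icc 2 n, g (i - 1) = (∑ i ∈ Finset.range n, g i) - g 0 := by
  have h1 : ∑ i ∈ Finset.Icc 2 n, g (i - 1) = ∑ j ∈ Finset.Icc 1 (n - 1), g j := by
    have him : Finset.Icc 2 n = Finset.image (fun j => j + 1) (Finset.Icc 1 (n - 1)) := by
      ext i
      simp only [Finset.mem_image, Finset.mem_Icc]
      constructor
      · intro h; exact ⟨i - 1, by omega, by omega⟩
      · rintro ⟨j, hj, rfl⟩; omega
    rw [him, Finset.sum_image (by intro a _ b _ h; simpa using h)]
    simp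
  have h2 : Finset.range n = insert 0 (Finset.Icc 1 (n - 1)) := by
    ext i; simp only [Finset.mem_range, Finset.mem_insert, Finset.mem_Icc]; omega
  rw [h1, h2, Finset.sum_insert (by simp)]
  ring

lemma lap_det_zero {n : ℕ} (hn : 1 ≤ n) (K : SimpleGraph (Fin n)) :
    (K.lapMatrix ℝ).det = 0 := by
  rw [← Matrix.exists_mulVec_eq_zero_iff]
  refine ⟨fun _ => 1, ?_, K.lapMatrix_mulVec_const_eq_zero⟩
  intro h
  have := congrFun h ⟨0, hn⟩
  simp at this

lemma exists_eig_zero {n : ℕ} (hn : 1 ≤ n) (K : SimpleGraph (Fin n))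
    (hL : (K.lapMatrix ℝ).IsHermitian) : ∃ i, hL.eigenvalues i = 0 := by
  have hdet := lap_det_zero hn K
  rw [hL.det_eq_prod_eigenvalues] at hdet
  have := Finset.prod_eq_zero_iff.mp (by simpa using hdet)
  obtain ⟨i, _, hi⟩ := this
  exact ⟨i, by simpa using hi⟩

lemma eig_getD_zero {n : ℕ} (hn : 1 ≤ n) (K : SimpleGraph (Fin n))
    (hL : (K.lapMatrix ℝ).IsHermitian) :
    (sortedEigs (K.lapMatrix ℝ)).getD 0 0 = 0 := by
  have hlen := sortedEigs_length hL
  have hmem0 : (0 : ℝ) ∈ sortedEigs (K.lapMatrix ℝ) :=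
    (sortedEigs_mem hL).mpr (exists_eig_zero hn K hL)
  have hnn : ∀ x ∈ sortedEigs (K.lapMatrix ℝ), (0:ℝ) ≤ x := by
    intro x hx
    obtain ⟨i, rfl⟩ := (sortedEigs_mem hL).mp hx
    exact (SimpleGraph.posSemidef_lapMatrix ℝ K).eigenvalues_nonneg i
  have hsort := sortedEigs_sorted (K.lapMatrix ℝ)
  rcases hl : sortedEigs (K.lapMatrix ℝ) with _ | ⟨a, t⟩
  · rw [hl] at hlen; simp at hlen; omega
  · rw [hl] at hmem0 hnn hsort
    simp only [List.getD_cons_zero]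
    rcases List.mem_cons.mp hmem0 with h | h
    · exact h.symm
    · have h1 : a ≤ 0 := (List.pairwise_cons.mp hsort).1 0 h
      have h2 : 0 ≤ a := hnn a List.mem_cons_self
      linarith

lemma sum_f_eig {n : ℕ} (hn : 1 ≤ n) (K : SimpleGraph (Fin n))
    (hL : (K.lapMatrix ℝ).IsHermitian) (f : ℝ → ℝ) (hf0 : f 0 = 0) :
    ∑ i ∈ Finset.Icc 2 n, f (eig (K.lapMatrix ℝ) i) = ∑ i, f (hL.eigenvalues i) := by
  have hlen := sortedEigs_length hL
  simp only [eig]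
  rw [sum_Icc_getD (fun j => f ((sortedEigs (K.lapMatrix ℝ)).getD j 0)) n hn]
  simp only [eig_getD_zero hn K hL, hf0]
  rw [sub_zero]
  have h := list_getD_sum_f f (sortedEigs (K.lapMatrix ℝ))
  rw [hlen] at h
  rw [h, sortedEigs_map_sum hL]

lemma lap_entry {n : ℕ} (K : SimpleGraph (Fin n)) (i j : Fin n) :
    (K.lapMatrix ℝ) i j
      = (if i = j then (K.degree i : ℝ) else 0) - (if K.Adj i j then 1 else 0) := by
  simp [SimpleGraph.lapMatrix, SimpleGraph.degMatrix, Matrix.diagonal, Matrix.sub_apply]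

lemma deg_eq_sum {n : ℕ} (K : SimpleGraph (Fin n)) (i : Fin n) :
    (K.degree i : ℝ) = ∑ j, (if K.Adj i j then (1:ℝ) else 0) := by
  rw [Finset.sum_boole]
  congr 1
  rw [SimpleGraph.degree, SimpleGraph.neighborFinset_eq_filter]

lemma lap_trace {n : ℕ} (K : SimpleGraph (Fin n)) :
    (K.lapMatrix ℝ).trace = ∑ i, ∑ j, (if K.Adj i j then (1:ℝ) else 0) := by
  rw [Matrix.trace]
  refine Finset.sum_congr rfl fun i _ => ?_
  rw [Matrix.diag_apply, lap_entry, ← deg_eq_sum]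
  simp

lemma lap_trace_sq {n : ℕ} (K : SimpleGraph (Fin n)) :
    (K.lapMatrix ℝ * K.lapMatrix ℝ).trace
      = ∑ i, (∑ j, (if K.Adj i j then (1:ℝ) else 0)) ^ 2
        + ∑ i, ∑ j, (if K.Adj i j then (1:ℝ) else 0) := by
  rw [Matrix.trace, ← Finset.sum_add_distrib]
  refine Finset.sum_congr rfl fun i _ => ?_
  rw [Matrix.diag_apply, Matrix.mul_apply]
  have hterm : ∀ j, (K.lapMatrix ℝ) i j * (K.lapMatrix ℝ) j i
      = (if i = j then (K.degree i : ℝ)^2 else 0) + (if K.Adj i j then 1 else 0) := by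
    intro j
    by_cases h : i = j
    · subst h
      simp [lap_entry, K.irrefl, sq]
    · have h' : ¬ j = i := fun hh => h hh.symm
      rw [lap_entry, lap_entry, if_neg h, if_neg h', K.adj_comm j i]
      by_cases ha : K.Adj i j <;> simp [ha, h]
  simp only [hterm, Finset.sum_add_distrib, Finset.sum_ite_eq, Finset.mem_univ, if_pos]
  rw [← deg_eq_sum]

end Aux

set_option maxHeartbeats 1000000 in
/-- The variance of the uniform nontrivial Laplacian eigenvalue `ℓ` of a random
subgraph of `G` equals `S(m,n,p,d)²/(n-1)²`. -/
theorem variance_eq_S_sq {Ω : Type*} [Fintype Ω] [MeasurableSpace Ω]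
    [MeasurableSingletonClass Ω] (μ : Measure Ω) [IsProbabilityMeasure μ]
    {n : ℕ} (hn : 2 ≤ n) (G : SimpleGraph (Fin n)) (hG : G.Connected)
    (p : ℝ) (hp0 : 0 < p) (hp1 : p < 1)
    (H : Ω → SimpleGraph (Fin n)) (hsub : ∀ ω, H ω ≤ G)
    (hedge : ∀ e ∈ G.edgeSet, (μ {ω | e ∈ (H ω).edgeSet}).toReal = p)
    (hind : iIndepSet (fun e : G.edgeSet => {ω | (e : Sym2 (Fin n)) ∈ (H ω).edgeSet}) μ) :
    (∫ ω, (((n : ℝ) - 1)⁻¹ * ∑ i ∈ Finset.Icc 2 n, (eig ((H ω).lapMatrix ℝ) i) ^ 2) ∂μ)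
      - (∫ ω, (((n : ℝ) - 1)⁻¹ * ∑ i ∈ Finset.Icc 2 n, eig ((H ω).lapMatrix ℝ) i) ∂μ) ^ 2
      = (S G.edgeFinset.card n p (fun i => G.degree i)) ^ 2 / ((n : ℝ) - 1) ^ 2 := by
  have hn1 : 1 ≤ n := by omega
  have hNn : (2:ℝ) ≤ (n:ℝ) := by exact_mod_cast hn
  set m : ℕ := G.edgeFinset.card with hm
  set A : Sym2 (Fin n) → Set Ω := fun e => {ω | e ∈ (H ω).edgeSet} with hA
  set X : Sym2 (Fin n) → Ω → ℝ := fun e ω => if ω ∈ A e then 1 else 0 with hX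
  set c : Fin n → Fin n → ℝ := fun i j => if G.Adj i j then 1 else 0 with hc
  set Y : Fin n → Fin n → Ω → ℝ := fun i j ω => if (H ω).Adj i j then 1 else 0 with hY
  have hInt : ∀ f : Ω → ℝ, Integrable f μ := fun f => .of_finite
  -- pointwise identity
  have hYX : ∀ i j ω, Y i j ω = c i j * X s(i, j) ω := by
    intro i j ω
    by_cases hg : G.Adj i j
    · simp only [hY, hc, hX, hA, if_pos hg, one_mul, Set.mem_setOf_eq,
        SimpleGraph.mem_edgeSet]
    · have hH : ¬ (H ω).Adj i j := fun h => hg (hsub ω h)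
      simp [hY, hc, hg, hH]
  -- basic integrals
  have I1 : ∀ e ∈ G.edgeSet, ∫ ω, X e ω ∂μ = p := by
    intro e he
    have : X e = (A e).indicator (fun _ => (1:ℝ)) := by
      funext ω; simp [hX, Set.indicator_apply]
    rw [this]
    rw [show (A e).indicator (fun _ => (1:ℝ)) = (A e).indicator 1 from rfl]
    rw [integral_indicator_one .of_discrete]
    exact hedge e he
  have I2 : ∀ e ∈ G.edgeSet, ∀ f ∈ G.edgeSet, e ≠ f → ∫ ω, X e ω * X f ω ∂μ = p ^ 2 := by
    intro e he f hf hef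
    have hpt : (fun ω => X e ω * X f ω) = (A e ∩ A f).indicator 1 := by
      funext ω
      by_cases h1 : ω ∈ A e <;> by_cases h2 : ω ∈ A f <;>
        simp [hX, Set.indicator_apply, h1, h2]
    rw [hpt, integral_indicator_one .of_discrete]
    have hne : (⟨e, he⟩ : G.edgeSet) ≠ ⟨f, hf⟩ := by simpa [Subtype.ext_iff] using hef
    have hmeas := hind.meas_biInter ({⟨e, he⟩, ⟨f, hf⟩} : Finset G.edgeSet)
    rw [show (⋂ i ∈ ({⟨e, he⟩, ⟨f, hf⟩} : Finset G.edgeSet),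
        {ω | (i : Sym2 (Fin n)) ∈ (H ω).edgeSet}) = A e ∩ A f by simp [hA],
      Finset.prod_pair hne] at hmeas
    rw [measureReal_def, hmeas, ENNReal.toReal_mul, hedge e he, hedge f hf, sq]
  have IXX : ∀ e ∈ G.edgeSet, ∀ f ∈ G.edgeSet,
      ∫ ω, X e ω * X f ω ∂μ = if e = f then p else p ^ 2 := by
    intro e he f hf
    by_cases hef : e = f
    · subst hef
      rw [if_pos rfl]
      have : ∀ ω, X e ω * X e ω = X e ω := by
        intro ω; by_cases h : ω ∈ A e <;> simp [hX, h]
      simp only [this]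
      exact I1 e he
    · rw [if_neg hef]; exact I2 e he f hf hef
  -- key integrals for Y
  have key1 : ∀ i j, ∫ ω, Y i j ω ∂μ = c i j * p := by
    intro i j
    by_cases hg : G.Adj i j
    · simp only [hYX, hc, if_pos hg, one_mul]
      exact I1 _ (G.mem_edgeSet.mpr hg)
    · simp only [hYX, hc, if_neg hg, zero_mul]
      simp
  have key2 : ∀ i j k, ∫ ω, Y i j ω * Y i k ω ∂μ
      = c i j * c i k * (if j = k then p else p ^ 2) := by
    intro i j k
    by_cases hj : G.Adj i j
    · by_cases hk : G.Adj i k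
      · have hmem_j : s(i, j) ∈ G.edgeSet := G.mem_edgeSet.mpr hj
        have hmem_k : s(i, k) ∈ G.edgeSet := G.mem_edgeSet.mpr hk
        simp only [hYX, hc, if_pos hj, if_pos hk, one_mul]
        rw [IXX _ hmem_j _ hmem_k]
        congr 1
        by_cases hjk : j = k
        · subst hjk; simp
        · have hik : i ≠ k := G.ne_of_adj hk
          have hne2 : ¬ (s(i, j) : Sym2 (Fin n)) = s(i, k) := by
            intro hEq
            rcases Sym2.eq_iff.mp hEq with ⟨-, h⟩ | ⟨h, -⟩
            · exact hjk h
            · exact hik h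
          simp [hne2, hjk]
      · have h0 : ∀ ω, Y i j ω * Y i k ω = 0 := fun ω => by
          rw [hYX i k]; simp [hc, hk]
        simp only [h0, integral_zero]
        simp [hc, hk]
    · have h0 : ∀ ω, Y i j ω * Y i k ω = 0 := fun ω => by
        rw [hYX i j]; simp [hc, hj]
      simp only [h0, integral_zero]
      simp [hc, hj]
  -- degree facts
  have hdeg : ∀ i, ∑ j, c i j = (G.degree i : ℝ) := fun i => (deg_eq_sum G i).symm
  have hsumdeg : ∑ i, (G.degree i : ℝ) = 2 * m := by
    rw [← Nat.cast_sum]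
    norm_cast
    simpa [hm] using G.sum_degrees_eq_twice_card_edges
  have hc2 : ∀ i j, c i j * c i j = c i j := by
    intro i j; by_cases h : G.Adj i j <;> simp [hc, h]
  -- expectation of degree-weighted sums
  have Erow : ∀ i, ∫ ω, (∑ j, Y i j ω) ∂μ = (G.degree i : ℝ) * p := by
    intro i
    rw [integral_finset_sum _ fun _ _ => hInt _]
    simp_rw [key1]
    rw [← Finset.sum_mul, hdeg i]
  have E1 : ∫ ω, (∑ i, ∑ j, Y i j ω) ∂μ = 2 * m * p := by
    rw [integral_finset_sum _ fun _ _ => hInt _]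
    simp_rw [Erow]
    rw [← Finset.sum_mul, hsumdeg]
  have Esq : ∀ i, ∫ ω, (∑ j, Y i j ω) ^ 2 ∂μ
      = p ^ 2 * (G.degree i : ℝ) ^ 2 + (p - p ^ 2) * (G.degree i : ℝ) := by
    intro i
    have expand : ∀ ω : Ω, (∑ j, Y i j ω) ^ 2 = ∑ j, ∑ k, Y i j ω * Y i k ω := by
      intro ω; rw [sq, Finset.sum_mul_sum]
    simp_rw [expand]
    rw [integral_finset_sum _ fun _ _ => hInt _]
    have : ∀ j, ∫ ω, (∑ k, Y i j ω * Y i k ω) ∂μ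
        = c i j * p ^ 2 * (G.degree i : ℝ) + (p - p ^ 2) * c i j := by
      intro j
      rw [integral_finset_sum _ fun _ _ => hInt _]
      simp_rw [key2]
      have hsplit : ∀ k, c i j * c i k * (if j = k then p else p ^ 2)
          = c i j * p ^ 2 * c i k + (if j = k then (p - p ^ 2) * (c i j * c i k) else 0) := by
        intro k
        by_cases h : j = k
        · subst h; simp; ring
        · simp [h]; ring
      simp_rw [hsplit]
      rw [Finset.sum_add_distrib, ← Finset.mul_sum, hdeg i, Finset.sum_ite_eq,
        if_pos (Finset.mem_univ j), hc2]
    simp_rw [this]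
    rw [Finset.sum_add_distrib]
    have e1 : ∑ j, c i j * p ^ 2 * (G.degree i : ℝ)
        = (G.degree i : ℝ) * p ^ 2 * (G.degree i : ℝ) := by
      rw [← Finset.sum_mul, ← Finset.sum_mul, hdeg i]
    have e2 : ∑ j, (p - p ^ 2) * c i j = (p - p ^ 2) * (G.degree i : ℝ) := by
      rw [← Finset.mul_sum, hdeg i]
    rw [e1, e2]
    ring
  have E2 : ∫ ω, (∑ i, (∑ j, Y i j ω) ^ 2) ∂μ
      = p ^ 2 * (∑ i, (G.degree i : ℝ) ^ 2) + (p - p ^ 2) * (2 * m) := by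
    rw [integral_finset_sum _ fun _ _ => hInt _]
    simp_rw [Esq]
    rw [Finset.sum_add_distrib, ← Finset.mul_sum, ← Finset.mul_sum, hsumdeg]
  -- deterministic spectral identities
  have hHerm : ∀ ω, ((H ω).lapMatrix ℝ).IsHermitian :=
    fun ω => (SimpleGraph.posSemidef_lapMatrix ℝ (H ω)).1
  have htr1 : ∀ ω, ∑ i ∈ Finset.Icc 2 n, eig ((H ω).lapMatrix ℝ) i
      = ∑ i, ∑ j, Y i j ω := by
    intro ω
    rw [sum_f_eig hn1 (H ω) (hHerm ω) (fun x => x) rfl, ← trace_eq_sum_eig (hHerm ω),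
      lap_trace]
  have htr2 : ∀ ω, ∑ i ∈ Finset.Icc 2 n, (eig ((H ω).lapMatrix ℝ) i) ^ 2
      = ∑ i, (∑ j, Y i j ω) ^ 2 + ∑ i, ∑ j, Y i j ω := by
    intro ω
    rw [sum_f_eig hn1 (H ω) (hHerm ω) (fun x => x ^ 2) (by norm_num),
      ← trace_sq_eq_sum_eig_sq (hHerm ω), lap_trace_sq]
  -- compute both integrals
  have hIa : (∫ ω, (((n : ℝ) - 1)⁻¹ * ∑ i ∈ Finset.Icc 2 n, (eig ((H ω).lapMatrix ℝ) i) ^ 2) ∂μ)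
      = ((n : ℝ) - 1)⁻¹ * (p ^ 2 * (∑ i, (G.degree i : ℝ) ^ 2) + (p - p ^ 2) * (2 * m) + 2 * m * p) := by
    simp_rw [htr2]
    rw [integral_const_mul, integral_add (hInt _) (hInt _), E2, E1]
  have hIb : (∫ ω, (((n : ℝ) - 1)⁻¹ * ∑ i ∈ Finset.Icc 2 n, eig ((H ω).lapMatrix ℝ) i) ∂μ)
      = ((n : ℝ) - 1)⁻¹ * (2 * m * p) := by
    simp_rw [htr1]
    rw [integral_const_mul, E1]
  rw [hIa, hIb]
  -- nonnegativity of the inner expression of S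
  have hCS : (∑ i, (G.degree i : ℝ)) ^ 2 ≤ (n : ℝ) * ∑ i, (G.degree i : ℝ) ^ 2 := by
    have := sq_sum_le_card_mul_sum_sq (s := (Finset.univ : Finset (Fin n)))
      (f := fun i => (G.degree i : ℝ))
    simpa using this
  have hdegle : ∀ i, (G.degree i : ℝ) ≤ (n : ℝ) - 1 := by
    intro i
    have h1 : G.degree i < n := by
      have := G.degree_lt_card_verts i
      rwa [Fintype.card_fin] at this
    have h2 : G.degree i + 1 ≤ n := h1
    have h3 : (G.degree i : ℝ) + 1 ≤ (n : ℝ) := by exact_mod_cast h2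
    linarith
  have hmle : 2 * (m : ℝ) ≤ (n : ℝ) * ((n : ℝ) - 1) := by
    have : ∑ i, (G.degree i : ℝ) ≤ ∑ _i : Fin n, ((n : ℝ) - 1) :=
      Finset.sum_le_sum fun i _ => hdegle i
    rw [hsumdeg, Finset.sum_const, Finset.card_univ, Fintype.card_fin, nsmul_eq_mul] at this
    linarith
  have hmnn : (0:ℝ) ≤ (m:ℝ) := Nat.cast_nonneg m
  have hDnn : (0:ℝ) ≤ ∑ i, (G.degree i : ℝ) ^ 2 := Finset.sum_nonneg fun i _ => sq_nonneg _
  have h4m : 4 * (m:ℝ)^2 ≤ (n:ℝ) * ∑ i, (G.degree i : ℝ) ^ 2 := by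
    have := hCS; rw [hsumdeg] at this; nlinarith
  have hN1 : (0:ℝ) < (n:ℝ) - 1 := by linarith
  have hNpos : (0:ℝ) < (n:ℝ) := by linarith
  have hnonneg : 0 ≤ 2 * (m:ℝ) * p * ((n : ℝ) - 1) * (2 - p)
      + p ^ 2 * ((n : ℝ) - 1) * ∑ i, (G.degree i : ℝ) ^ 2 - 4 * (m : ℝ) ^ 2 * p ^ 2 := by
    have hs : 0 ≤ (n:ℝ) * (2 * (m:ℝ) * p * ((n : ℝ) - 1) * (2 - p)
        + p ^ 2 * ((n : ℝ) - 1) * ∑ i, (G.degree i : ℝ) ^ 2 - 4 * (m : ℝ) ^ 2 * p ^ 2) := by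
      have hi : 4 * (m:ℝ)^2 * (((n:ℝ) - 1) * p^2)
          ≤ ((n:ℝ) * ∑ i, (G.degree i : ℝ) ^ 2) * (((n:ℝ) - 1) * p^2) :=
        mul_le_mul_of_nonneg_right h4m (mul_nonneg hN1.le (sq_nonneg p))
      have hii : 2 * (m:ℝ) * (2 * (m:ℝ) * p^2)
          ≤ (n:ℝ) * ((n:ℝ) - 1) * (2 * (m:ℝ) * p^2) :=
        mul_le_mul_of_nonneg_right hmle
          (mul_nonneg (by linarith : (0:ℝ) ≤ 2 * (m:ℝ)) (sq_nonneg p))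
      have hiii : 0 ≤ 2 * (m:ℝ) * p * (n:ℝ) * ((n:ℝ) - 1) * (2 - 2*p) :=
        mul_nonneg (mul_nonneg (mul_nonneg (mul_nonneg
          (by linarith : (0:ℝ) ≤ 2 * (m:ℝ)) hp0.le) hNpos.le) hN1.le)
          (by linarith : (0:ℝ) ≤ 2 - 2*p)
      nlinarith [hi, hii, hiii]
    nlinarith [hs, hNpos]
  have hSsq : (S m n p (fun i => G.degree i)) ^ 2
      = 2 * (m:ℝ) * p * ((n : ℝ) - 1) * (2 - p)
        + p ^ 2 * ((n : ℝ) - 1) * ∑ i, (G.degree i : ℝ) ^ 2 - 4 * (m : ℝ) ^ 2 * p ^ 2 := by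
    rw [S]
    exact Real.sq_sqrt hnonneg
  rw [hSsq]
  have hne : ((n:ℝ) - 1) ≠ 0 := by linarith
  field_simp
  ring
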